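/- Let Ω ⊂ ℝ² be the open triangle with vertices A(−2, 1/3), B(0, 1/3), C(0, 1). Define α(x,y) = ((x y² + y − 1/9)/3)^{1/3} + 1/3 (real cube root) and z(x,y) = 1 − e^{1/α(x,y) − 1/y}. Then: (i) α(x,y) > 0 for every (x,y) ∈ Ω; (ii) for every (x,y) ∈ Ω, z(x,y) + (2xy+1)·∂z/∂x(x,y) − y²·∂z/∂y(x,y) = 1; (iii) z(x, x/3 + 1) = 0 for every x ∈ (−2, 0). -/

import Mathlib

open MeasureTheory Set Real

/-- The real (odd) cube root. -/
noncomputable def cbrt (t : ℝ) : ℝ :=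
  if 0 ≤ t then t ^ ((1:ℝ)/3) else -((-t) ^ ((1:ℝ)/3))

/-- The open triangle with vertices A(−2,1/3), B(0,1/3), C(0,1):
its sides lie on the lines y = 1/3, x = 0 and y = x/3 + 1. -/
def TriangleEx4 : Set (ℝ × ℝ) :=
  {p : ℝ × ℝ | 1/3 < p.2 ∧ p.1 < 0 ∧ p.2 < p.1 / 3 + 1}

/-- α(x,y) = ((x y² + y − 1/9)/3)^{1/3} + 1/3. -/
noncomputable def alphaEx4 : ℝ × ℝ → ℝ := fun p =>
  cbrt ((p.1 * p.2 ^ 2 + p.2 - 1/9) / 3) + 1/3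

/-- The explicit solution z(x,y) = 1 − e^{1/α(x,y) − 1/y} of Example 4. -/
noncomputable def zEx4 : ℝ × ℝ → ℝ := fun p =>
  1 - Real.exp (1 / alphaEx4 p - 1 / p.2)

/-- Partial derivative ∂z/∂x. -/
noncomputable def zEx4x (p : ℝ × ℝ) : ℝ := deriv (fun t => zEx4 (t, p.2)) p.1

/-- Partial derivative ∂z/∂y. -/
noncomputable def zEx4y (p : ℝ × ℝ) : ℝ := deriv (fun t => zEx4 (p.1, t)) p.2

lemma cbrt_of_nonneg {t : ℝ} (h : 0 ≤ t) : cbrt t = t ^ ((1:ℝ)/3) := if_pos h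

lemma cbrt_cube {s : ℝ} (hs : 0 ≤ s) : cbrt (s ^ 3) = s := by
  rw [cbrt, if_pos (by positivity), ← Real.rpow_natCast s 3, ← Real.rpow_mul hs]
  norm_num

lemma hasDerivAt_cbrt_comp {w : ℝ → ℝ} {w' t : ℝ} (hw : HasDerivAt w w' t)
    (hpos : 0 < w t) :
    HasDerivAt (fun s => cbrt (w s)) ((1:ℝ)/3 * (w t) ^ ((1:ℝ)/3 - 1) * w') t := by
  have h1 : HasDerivAt (fun s => (w s) ^ ((1:ℝ)/3))
      ((1:ℝ)/3 * (w t) ^ ((1:ℝ)/3 - 1) * w') t :=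
    (Real.hasDerivAt_rpow_const (p := (1:ℝ)/3) (Or.inl hpos.ne')).comp t hw
  refine h1.congr_of_eventuallyEq ?_
  have hev : ∀ᶠ s in nhds t, 0 < w s :=
    hw.continuousAt.preimage_mem_nhds (Ioi_mem_nhds hpos)
  filter_upwards [hev] with s hs
  exact cbrt_of_nonneg hs.le

/-- Positivity of the cube-root argument on the triangle. -/
lemma w_pos {p : ℝ × ℝ} (hp : p ∈ TriangleEx4) :
    0 < (p.1 * p.2 ^ 2 + p.2 - 1/9) / 3 := by
  obtain ⟨h1, h2, h3⟩ := hp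
  set x := p.1; set y := p.2
  have hy2 : (0:ℝ) < y ^ 2 := by nlinarith
  have hx : 3 * (y - 1) < x := by linarith
  have hcube : (0:ℝ) < (y - 1/3) ^ 3 := pow_pos (by linarith) 3
  nlinarith [mul_lt_mul_of_pos_right hx hy2]

lemma alpha_pos {p : ℝ × ℝ} (hp : p ∈ TriangleEx4) : 0 < alphaEx4 p := by
  have hw := w_pos hp
  have := Real.rpow_pos_of_pos hw ((1:ℝ)/3)
  unfold alphaEx4
  rw [cbrt_of_nonneg hw.le]
  linarith

theorem stmt_4 :
    (∀ p ∈ TriangleEx4, 0 < alphaEx4 p) ∧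
    (∀ p ∈ TriangleEx4,
      zEx4 p + (2 * p.1 * p.2 + 1) * zEx4x p - p.2 ^ 2 * zEx4y p = 1) ∧
    (∀ x ∈ Ioo (-2:ℝ) 0, zEx4 (x, x / 3 + 1) = 0) := by
  refine ⟨fun p hp => alpha_pos hp, ?_, ?_⟩
  · intro p hp
    obtain ⟨h1, h2, h3⟩ := hp
    set x := p.1 with hx
    set y := p.2 with hy
    have hy0 : y ≠ 0 := by intro h; rw [h] at h1; norm_num at h1
    have hw : 0 < (x * y ^ 2 + y - 1/9) / 3 := w_pos ⟨h1, h2, h3⟩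
    have hA : 0 < alphaEx4 p := alpha_pos ⟨h1, h2, h3⟩
    set W : ℝ := (x * y ^ 2 + y - 1/9) / 3 with hW
    set K : ℝ := W ^ ((1:ℝ)/3 - 1) with hK
    set A : ℝ := alphaEx4 p with hAdef
    have hAne : A ≠ 0 := ne_of_gt hA
    -- derivative in x
    have hwx : HasDerivAt (fun t => (t * y ^ 2 + y - 1/9) / 3) (y ^ 2 / 3) x := by
      have h0 := ((((hasDerivAt_id x).mul_const (y ^ 2)).add_const y).sub_const
        ((1:ℝ)/9)).div_const 3
      refine h0.congr_deriv ?_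
      ring
    have hax : HasDerivAt (fun t => cbrt ((t * y ^ 2 + y - 1/9) / 3) + 1/3)
        ((1:ℝ)/3 * K * (y ^ 2 / 3)) x := by
      have := (hasDerivAt_cbrt_comp hwx (by simpa [hW] using hw)).add_const (1/3:ℝ)
      simpa [hK, hW] using this
    have hAx : cbrt ((x * y ^ 2 + y - 1/9) / 3) + 1/3 = A := by
      simp [hAdef, alphaEx4, hx, hy]
    have hgx : HasDerivAt (fun t => 1 / (cbrt ((t * y ^ 2 + y - 1/9) / 3) + 1/3) - 1 / y)
        ((0 * A - 1 * ((1:ℝ)/3 * K * (y ^ 2 / 3))) / A ^ 2) x := by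
      have := ((hasDerivAt_const x (1:ℝ)).div hax
        (by rw [hAx]; exact hAne)).sub_const (1 / y)
      rwa [hAx] at this
    have hzx : zEx4x p =
        -(Real.exp (1 / A - 1 / y) * ((0 * A - 1 * ((1:ℝ)/3 * K * (y ^ 2 / 3))) / A ^ 2)) := by
      have h := (hgx.exp).const_sub (1:ℝ)
      have heq : (fun t => zEx4 (t, y)) =
          fun t => 1 - Real.exp (1 / (cbrt ((t * y ^ 2 + y - 1/9) / 3) + 1/3) - 1 / y) := by
        funext t; simp [zEx4, alphaEx4]
      rw [zEx4x, ← hy, heq, h.deriv, hAx]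
    -- derivative in y
    have hwy : HasDerivAt (fun s => (x * s ^ 2 + s - 1/9) / 3) ((2 * x * y + 1) / 3) y := by
      have h0 := ((((hasDerivAt_pow 2 y).const_mul x).add (hasDerivAt_id y)).sub_const
        ((1:ℝ)/9)).div_const 3
      refine h0.congr_deriv ?_
      push_cast
      ring
    have hay : HasDerivAt (fun s => cbrt ((x * s ^ 2 + s - 1/9) / 3) + 1/3)
        ((1:ℝ)/3 * K * ((2 * x * y + 1) / 3)) y := by
      have := (hasDerivAt_cbrt_comp hwy (by simpa [hW] using hw)).add_const (1/3:ℝ)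
      simpa [hK, hW] using this

    have hinvy : HasDerivAt (fun s : ℝ => 1 / s) ((0 * y - 1 * 1) / y ^ 2) y :=
      (hasDerivAt_const y (1:ℝ)).div (hasDerivAt_id y) hy0
    have hgy : HasDerivAt (fun s => 1 / (cbrt ((x * s ^ 2 + s - 1/9) / 3) + 1/3) - 1 / s)
        ((0 * A - 1 * ((1:ℝ)/3 * K * ((2 * x * y + 1) / 3))) / A ^ 2
          - (0 * y - 1 * 1) / y ^ 2) y := by
      have := ((hasDerivAt_const y (1:ℝ)).div hay
        (by rw [hAx]; exact hAne)).sub hinvy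
      rwa [hAx] at this
    have hzy : zEx4y p =
        -(Real.exp (1 / A - 1 / y) *
          ((0 * A - 1 * ((1:ℝ)/3 * K * ((2 * x * y + 1) / 3))) / A ^ 2
            - (0 * y - 1 * 1) / y ^ 2)) := by
      have h := (hgy.exp).const_sub (1:ℝ)
      have heq : (fun s => zEx4 (x, s)) =
          fun s => 1 - Real.exp (1 / (cbrt ((x * s ^ 2 + s - 1/9) / 3) + 1/3) - 1 / s) := by
        funext s; simp [zEx4, alphaEx4]
      rw [zEx4y, ← hx, heq, h.deriv, hAx]
    have hz : zEx4 p = 1 - Real.exp (1 / A - 1 / y) := by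
      simp [zEx4, hAdef]
      exact hy.symm
    rw [hz, hzx, hzy]
    set E := Real.exp (1 / A - 1 / y)
    field_simp
    ring
  · intro x hx
    obtain ⟨h1, h2⟩ := hx
    have hs : (0:ℝ) ≤ x / 3 + 2/3 := by linarith
    have hW : (x * (x / 3 + 1) ^ 2 + (x / 3 + 1) - 1/9) / 3 = (x / 3 + 2/3) ^ 3 := by ring
    have : alphaEx4 (x, x / 3 + 1) = x / 3 + 1 := by
      simp only [alphaEx4]
      rw [hW, cbrt_cube hs]
      ring
    simp [zEx4, this]
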